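/- Let n ≥ 1, μ ∈ ℝ, and let f ∈ C⁰(ℝⁿ). Suppose that for every x ∈ ℝⁿ there exists λ > 0 such that (λ/|y−x|)^μ · f(x + λ²(y−x)/|y−x|²) = f(y) for all y ∈ ℝⁿ \ {x}. Then there exist a ≥ 0, d > 0 and x̄ ∈ ℝⁿ such that f(x) = a·(1/(d + |x−x̄|²))^{μ/2} for all x ∈ ℝⁿ, or f(x) = −a·(1/(d + |x−x̄|²))^{μ/2} for all x ∈ ℝⁿ. -/

import Mathlib

open Filter Topology

/-- A function whose increments are bounded by the square of the step is constant. -/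
lemma quad_incr_const (ψ : ℝ → ℝ) (key : ∀ s δ : ℝ, |ψ (s + δ) - ψ s| ≤ δ ^ 2) :
    ∀ u : ℝ, ψ u = ψ 0 := by
  intro u
  have main : ∀ N : ℕ, 0 < N → |ψ u - ψ 0| ≤ u ^ 2 / N := by
    intro N hN
    have hNR : (0:ℝ) < N := by exact_mod_cast hN
    have step : ∀ i : ℕ, |ψ (i * (u / N)) - ψ 0| ≤ i * (u / N) ^ 2 := by
      intro i
      induction i with
      | zero => simp
      | succ i ih =>
        push_cast
        have h2 := key ((i : ℝ) * (u / N)) (u / N)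
        have e1 : ((i : ℕ) + 1 : ℝ) * (u / N) = (i : ℝ) * (u / N) + u / N := by ring
        calc |ψ (((i : ℕ) + 1 : ℝ) * (u / N)) - ψ 0|
            = |(ψ ((i : ℝ) * (u / N) + u / N) - ψ ((i : ℝ) * (u / N)))
               + (ψ ((i : ℝ) * (u / N)) - ψ 0)| := by rw [e1]; ring_nf
          _ ≤ |ψ ((i : ℝ) * (u / N) + u / N) - ψ ((i : ℝ) * (u / N))|
               + |ψ ((i : ℝ) * (u / N)) - ψ 0| := abs_add_le _ _
          _ ≤ (u / N) ^ 2 + i * (u / N) ^ 2 := add_le_add h2 ih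
          _ = ((i : ℕ) + 1 : ℝ) * (u / N) ^ 2 := by ring
    have := step N
    have e2 : (N : ℝ) * (u / N) = u := by field_simp
    have e3 : (N : ℝ) * (u / N) ^ 2 = u ^ 2 / N := by field_simp
    push_cast at this
    rw [e2, e3] at this
    exact this
  by_contra hne
  have hpos : 0 < |ψ u - ψ 0| := abs_pos.mpr (sub_ne_zero.mpr hne)
  obtain ⟨N, hNgt⟩ := exists_nat_gt (max 1 (u ^ 2 / |ψ u - ψ 0|))
  have h1R : (1:ℝ) < N := lt_of_le_of_lt (le_max_left _ _) hNgt
  have hN0 : 0 < N := by exact_mod_cast zero_lt_one.trans h1R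
  have hNR : (0:ℝ) < N := by exact_mod_cast hN0
  have h2 : u ^ 2 / |ψ u - ψ 0| < N := lt_of_le_of_lt (le_max_right _ _) hNgt
  have h3 : u ^ 2 / N < |ψ u - ψ 0| := by
    rw [div_lt_iff₀ hNR]
    rw [div_lt_iff₀ hpos] at h2
    linarith
  exact absurd (main N hN0) (not_le.mpr h3)

lemma oneD_FE (φ : ℝ → ℝ) (hpos : ∀ t, 0 < φ t) (hmin : ∀ t, φ 0 ≤ φ t)
    (hFE : ∀ s t : ℝ, t ≠ s → φ s * φ t = (t - s) ^ 2 * φ (s + φ s / (t - s))) :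
    ∀ t, φ t = φ 0 + t ^ 2 := by
  have hd0 : 0 < φ 0 := hpos 0
  have hlow : ∀ t, t ^ 2 ≤ φ t := by
    intro t
    rcases eq_or_ne t 0 with rfl | ht
    · simpa using hd0.le
    · have h1 := hFE 0 t ht
      simp only [sub_zero, zero_add] at h1
      have h2 : φ 0 ≤ φ (φ 0 / t) := hmin _
      have ht2 : 0 < t ^ 2 := by positivity
      nlinarith [hpos (φ 0 / t), hpos t]
  set ψ : ℝ → ℝ := fun t => φ t - t ^ 2 with hψdef
  have hψ0 : ∀ t, 0 ≤ ψ t := fun t => sub_nonneg.mpr (hlow t)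
  have key1 : ∀ s δ : ℝ, δ ≠ 0 →
      (ψ (s + δ) - ψ s) * φ s = δ ^ 2 * (ψ (s + φ s / δ) - ψ s) := by
    intro s δ hδ
    have ha : 0 < φ s := hpos s
    have hc : φ s / δ ≠ 0 := div_ne_zero ha.ne' hδ
    have hts : s + φ s / δ ≠ s := by
      intro hcc; apply hc; linarith
    have hFE2 := hFE s (s + φ s / δ) hts
    rw [show s + φ s / δ - s = φ s / δ by ring] at hFE2
    rw [show s + φ s / (φ s / δ) = s + δ by field_simp] at hFE2
    -- hFE2 : φ s * φ (s + φ s / δ) = (φ s / δ) ^ 2 * φ (s + δ)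
    have hφe : φ (s + δ) = (δ ^ 2 / φ s) * φ (s + φ s / δ) := by
      field_simp at hFE2 ⊢
      nlinarith [hFE2]
    simp only [hψdef]
    rw [hφe]
    field_simp
    ring
  have key : ∀ s δ : ℝ, -δ ^ 2 ≤ ψ (s + δ) - ψ s := by
    intro s δ
    rcases eq_or_ne δ 0 with rfl | hδ
    · simp
    · have e := key1 s δ hδ
      have h1 : ψ s ≤ φ s := by
        simp only [hψdef]
        nlinarith [sq_nonneg s]
      rw [← mul_le_mul_iff_of_pos_right (hpos s), e]
      nlinarith [mul_nonneg (sq_nonneg δ) (hψ0 (s + φ s / δ)),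
        mul_le_mul_of_nonneg_left h1 (sq_nonneg δ)]
  have key2 : ∀ s δ : ℝ, |ψ (s + δ) - ψ s| ≤ δ ^ 2 := by
    intro s δ
    rw [abs_le]
    refine ⟨by simpa using key s δ, ?_⟩
    have := key (s + δ) (-δ)
    rw [show s + δ + -δ = s by ring] at this
    nlinarith [this]
  have hconst := quad_incr_const ψ key2
  intro t
  have := hconst t
  simp only [hψdef] at this
  have h0 : ψ 0 = φ 0 := by simp [hψdef]
  nlinarith [this, h0]

lemma rpow_inv_self {t μ : ℝ} (ht : 0 < t) (hμ : μ ≠ 0) : (t ^ μ) ^ (1/μ) = t := by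
  rw [← Real.rpow_mul ht.le, mul_one_div_cancel hμ, Real.rpow_one]

lemma lam_transform {μ a0 r lam gy gξ : ℝ} (hμ : μ ≠ 0) (ha0 : 0 < a0) (hr : 0 < r)
    (hlam : 0 < lam) (hgy : 0 < gy) (hgξ : 0 < gξ)
    (hrel : (lam / r) ^ μ * gξ = gy) :
    (a0 / gy) ^ (1/μ) = (a0 / gξ) ^ (1/μ) * (r / lam) := by
  have hA : 0 < (lam/r) ^ μ := Real.rpow_pos_of_pos (div_pos hlam hr) μ
  have hB : 0 < (r/lam) ^ μ := Real.rpow_pos_of_pos (div_pos hr hlam) μ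
  have hmul : (lam / r) ^ μ * (r / lam) ^ μ = 1 := by
    rw [← Real.mul_rpow (div_pos hlam hr).le (div_pos hr hlam).le,
      show lam / r * (r / lam) = 1 by field_simp, Real.one_rpow]
  have hfrac : a0 / gy = (a0 / gξ) * (r / lam) ^ μ := by
    rw [← hrel, div_mul_eq_mul_div, div_eq_div_iff (by positivity) hgξ.ne']
    linear_combination -a0 * gξ * hmul
  rw [hfrac, Real.mul_rpow (div_pos ha0 hgξ).le hB.le,
    rpow_inv_self (div_pos hr hlam) hμ]

set_option maxHeartbeats 2000000 in
theorem moving_sphere_calculus_eq (n : ℕ) (hn : 1 ≤ n) (μ : ℝ)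
    (f : EuclideanSpace ℝ (Fin n) → ℝ) (hf : Continuous f)
    (h : ∀ x : EuclideanSpace ℝ (Fin n), ∃ lam : ℝ, 0 < lam ∧
      ∀ y : EuclideanSpace ℝ (Fin n), y ≠ x →
        (lam / dist y x) ^ μ * f (x + (lam ^ 2 / dist y x ^ 2) • (y - x)) = f y) :
    ∃ (a d : ℝ) (xb : EuclideanSpace ℝ (Fin n)), 0 ≤ a ∧ 0 < d ∧
      ((∀ x, f x = a * (1 / (d + ‖x - xb‖ ^ 2)) ^ (μ / 2)) ∨
       (∀ x, f x = -a * (1 / (d + ‖x - xb‖ ^ 2)) ^ (μ / 2))) := by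
  classical
  -- a unit vector and the sequence going to infinity along it
  set e : EuclideanSpace ℝ (Fin n) := EuclideanSpace.single (⟨0, by omega⟩ : Fin n) (1:ℝ)
    with he_def
  have he : ‖e‖ = 1 := by simp [he_def, EuclideanSpace.norm_single]
  set Y : ℕ → EuclideanSpace ℝ (Fin n) := fun k => (k : ℝ) • e with hY_def
  have hYnorm : ∀ k : ℕ, ‖Y k‖ = k := by
    intro k; simp [hY_def, norm_smul, he]
  have hdist : ∀ x, Tendsto (fun k => dist (Y k) x) atTop atTop := by
    intro x
    apply tendsto_atTop_mono (fun k => ?_)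
      (tendsto_atTop_add_const_right _ (-‖x‖) tendsto_natCast_atTop_atTop)
    have h1 := norm_sub_norm_le (Y k) x
    rw [dist_eq_norm]
    rw [hYnorm k] at h1
    linarith
  have hne : ∀ x, ∀ᶠ k in atTop, Y k ≠ x := by
    intro x
    filter_upwards [(hdist x).eventually_gt_atTop 0] with k hk
    exact fun hyx => absurd (dist_pos.mp hk) (by simp [hyx])
  have hxi : ∀ (x : EuclideanSpace ℝ (Fin n)) (lam : ℝ),
      Tendsto (fun k => x + (lam ^ 2 / dist (Y k) x ^ 2) • (Y k - x)) atTop (𝓝 x) := by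
    intro x lam
    rw [tendsto_iff_dist_tendsto_zero]
    have heq : ∀ᶠ k in atTop,
        lam ^ 2 / dist (Y k) x
          = dist (x + (lam ^ 2 / dist (Y k) x ^ 2) • (Y k - x)) x := by
      filter_upwards [(hdist x).eventually_gt_atTop 0] with k hk
      have h1 : dist (x + (lam ^ 2 / dist (Y k) x ^ 2) • (Y k - x)) x
          = ‖(lam ^ 2 / dist (Y k) x ^ 2) • (Y k - x)‖ := by
        rw [dist_eq_norm]; congr 1; abel
      rw [h1, norm_smul, Real.norm_eq_abs,
        abs_of_nonneg (by positivity : (0:ℝ) ≤ lam ^ 2 / dist (Y k) x ^ 2),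
        ← dist_eq_norm]
      field_simp
    exact Tendsto.congr' heq (tendsto_const_nhds.div_atTop (hdist x))
  by_cases hμ : μ = 0
  · -- μ = 0 : f is constant
    subst hμ
    have hconst : ∀ x, Tendsto (fun k => f (Y k)) atTop (𝓝 (f x)) := by
      intro x
      obtain ⟨lam, hlam, hx⟩ := h x
      have h1 : ∀ᶠ k in atTop,
          f (x + (lam ^ 2 / dist (Y k) x ^ 2) • (Y k - x)) = f (Y k) := by
        filter_upwards [hne x] with k hk
        rw [← hx (Y k) hk, Real.rpow_zero, one_mul]
      exact Tendsto.congr' h1 ((hf.tendsto x).comp (hxi x lam))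
    have hcc : ∀ x, f x = f 0 := fun x => tendsto_nhds_unique (hconst x) (hconst 0)
    refine ⟨|f 0|, 1, 0, abs_nonneg _, one_pos, ?_⟩
    rcases le_or_gt 0 (f 0) with hf0 | hf0
    · left; intro x
      rw [hcc x, show (0:ℝ)/2 = 0 by norm_num, Real.rpow_zero, mul_one, abs_of_nonneg hf0]
    · right; intro x
      rw [hcc x, show (0:ℝ)/2 = 0 by norm_num, Real.rpow_zero, mul_one, abs_of_neg hf0, neg_neg]
  · -- μ ≠ 0
    have stepA : ∀ (x : EuclideanSpace ℝ (Fin n)) (lam : ℝ), 0 < lam →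
        (∀ y, y ≠ x →
          (lam / dist y x) ^ μ * f (x + (lam ^ 2 / dist y x ^ 2) • (y - x)) = f y) →
        Tendsto (fun k => dist (Y k) x ^ μ * f (Y k)) atTop (𝓝 (lam ^ μ * f x)) := by
      intro x lam hlam hx
      have h1 : ∀ᶠ k in atTop,
          lam ^ μ * f (x + (lam ^ 2 / dist (Y k) x ^ 2) • (Y k - x))
            = dist (Y k) x ^ μ * f (Y k) := by
        filter_upwards [hne x, (hdist x).eventually_gt_atTop 0] with k hk hk2
        rw [← hx (Y k) hk, Real.div_rpow hlam.le dist_nonneg]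
        have hne2 : dist (Y k) x ^ μ ≠ 0 := (Real.rpow_pos_of_pos hk2 μ).ne'
        field_simp
      exact Tendsto.congr' h1 (tendsto_const_nhds.mul ((hf.tendsto x).comp (hxi x lam)))
    obtain ⟨lam₀, hlam₀, hx₀⟩ := h 0
    set L : ℝ := lam₀ ^ μ * f 0 with hL_def
    have stepB : ∀ (x : EuclideanSpace ℝ (Fin n)) (lam : ℝ), 0 < lam →
        (∀ y, y ≠ x →
          (lam / dist y x) ^ μ * f (x + (lam ^ 2 / dist y x ^ 2) • (y - x)) = f y) →
        lam ^ μ * f x = L := by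
      intro x lam hlam hx
      have hS : Tendsto (fun k => dist (Y k) 0 ^ μ * f (Y k)) atTop (𝓝 L) := by
        rw [hL_def]; exact stepA 0 lam₀ hlam₀ hx₀
      have hT := stepA x lam hlam hx
      set ρ : ℕ → ℝ := fun k => dist (Y k) x / dist (Y k) 0 with hρ_def
      have hρ : Tendsto ρ atTop (𝓝 1) := by
        have h0 : Tendsto (fun k => ρ k - 1) atTop (𝓝 0) := by
          apply squeeze_zero_norm' ?_ (tendsto_const_div_atTop_nhds_zero_nat ‖x‖)
          filter_upwards [eventually_ge_atTop 1] with k hk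
          have hk0 : (0:ℝ) < k := by exact_mod_cast Nat.lt_of_lt_of_le Nat.zero_lt_one hk
          have hk1 : (1:ℝ) ≤ k := by exact_mod_cast hk
          have hd0 : dist (Y k) 0 = (k:ℝ) := by rw [dist_zero_right, hYnorm]
          have habs : |dist (Y k) x - dist (Y k) 0| ≤ ‖x‖ := by
            rw [dist_comm (Y k) x, dist_comm (Y k) 0]
            simpa [dist_zero_right] using abs_dist_sub_le x 0 (Y k)
          have hrw : ρ k - 1 = (dist (Y k) x - dist (Y k) 0) / dist (Y k) 0 := by
            rw [hρ_def]
            field_simp [hd0, hk0.ne']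
          rw [hd0] at habs
          rw [Real.norm_eq_abs, hrw, abs_div, hd0, abs_of_pos hk0]
          gcongr
        have h1 := h0.add_const 1
        simpa using h1
      have hρμ : Tendsto (fun k => ρ k ^ μ) atTop (𝓝 1) := by
        have hc : ContinuousAt (fun t : ℝ => t ^ μ) 1 :=
          Real.continuousAt_rpow_const 1 μ (Or.inl one_ne_zero)
        have h2 := hc.tendsto.comp hρ
        rw [Real.one_rpow] at h2
        exact h2
      have heq : ∀ᶠ k in atTop,
          ρ k ^ μ * (dist (Y k) 0 ^ μ * f (Y k)) = dist (Y k) x ^ μ * f (Y k) := by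
        filter_upwards [(hdist x).eventually_gt_atTop 0, (hdist 0).eventually_gt_atTop 0]
          with k h1 h2
        have hρk : ρ k = dist (Y k) x / dist (Y k) 0 := rfl
        rw [hρk, Real.div_rpow dist_nonneg dist_nonneg]
        have hne2 : dist (Y k) 0 ^ μ ≠ 0 := (Real.rpow_pos_of_pos h2 μ).ne'
        rw [dist_zero_right] at hne2
        field_simp [hne2]
        try ring
      have hT2 : Tendsto (fun k => dist (Y k) x ^ μ * f (Y k)) atTop (𝓝 (1 * L)) :=
        Tendsto.congr' heq (hρμ.mul hS)
      rw [one_mul] at hT2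
      exact tendsto_nhds_unique hT hT2
    by_cases hL0 : L = 0
    · -- f ≡ 0
      have hf0 : ∀ x, f x = 0 := by
        intro x
        obtain ⟨lam, hlam, hx⟩ := h x
        have h1 := stepB x lam hlam hx
        rw [hL0] at h1
        have hpow : (0:ℝ) < lam ^ μ := Real.rpow_pos_of_pos hlam μ
        exact (mul_eq_zero.mp h1).resolve_left hpow.ne'
      exact ⟨0, 1, 0, le_refl 0, one_pos, Or.inl fun x => by rw [hf0 x, zero_mul]⟩
    · obtain ⟨s, hs1, hsL⟩ : ∃ s : ℝ, (s = 1 ∨ s = -1) ∧ 0 < s * L := by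
        rcases (Ne.lt_or_gt hL0) with hL | hL
        · exact ⟨-1, Or.inr rfl, by nlinarith⟩
        · exact ⟨1, Or.inl rfl, by nlinarith⟩
      set a0 : ℝ := s * L with ha0
      set g : EuclideanSpace ℝ (Fin n) → ℝ := fun x => s * f x with hg_def
      have hg : Continuous g := continuous_const.mul hf
      have hgrel : ∀ x, ∃ lam : ℝ, 0 < lam ∧ lam ^ μ * g x = a0 ∧
          ∀ y, y ≠ x →
            (lam / dist y x) ^ μ * g (x + (lam ^ 2 / dist y x ^ 2) • (y - x)) = g y := by
        intro x
        obtain ⟨lam, hlam, hx⟩ := h x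
        refine ⟨lam, hlam, ?_, ?_⟩
        · have h1 := stepB x lam hlam hx
          simp only [hg_def, ha0]
          linear_combination s * h1
        · intro y hy
          have h1 := hx y hy
          simp only [hg_def]
          linear_combination s * h1
      have hgpos : ∀ x, 0 < g x := by
        intro x
        obtain ⟨lam, hlam, heq, -⟩ := hgrel x
        have hpow : (0:ℝ) < lam ^ μ := Real.rpow_pos_of_pos hlam μ
        nlinarith [hsL]
      set Λ : EuclideanSpace ℝ (Fin n) → ℝ := fun x => (a0 / g x) ^ (1/μ) with hΛ_def
      have hΛpos : ∀ x, 0 < Λ x := fun x => Real.rpow_pos_of_pos (div_pos hsL (hgpos x)) _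
      have hΛeq : ∀ (x) (lam : ℝ), 0 < lam → lam ^ μ * g x = a0 → lam = Λ x := by
        intro x lam hlam heq
        have h1 : lam ^ μ = a0 / g x := by
          rw [eq_div_iff (hgpos x).ne']; exact heq
        calc lam = (lam ^ μ) ^ (1/μ) := (rpow_inv_self hlam hμ).symm
          _ = (a0 / g x) ^ (1/μ) := by rw [h1]
          _ = Λ x := rfl
      have hΛμ : ∀ x, Λ x ^ μ * g x = a0 := by
        intro x
        obtain ⟨lam, hlam, heq, -⟩ := hgrel x
        rw [← hΛeq x lam hlam heq]; exact heq
      have hKey : ∀ x y, y ≠ x →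
          Λ y = Λ (x + (Λ x ^ 2 / dist y x ^ 2) • (y - x)) * (dist y x / Λ x) := by
        intro x y hy
        obtain ⟨lam, hlam, heq, hrel⟩ := hgrel x
        have hlamx : lam = Λ x := hΛeq x lam hlam heq
        rw [hlamx] at hrel
        have hr0 : 0 < dist y x := dist_pos.mpr hy
        have hΛx0 : 0 < Λ x := hΛpos x
        have hgy := hrel y hy
        exact lam_transform hμ hsL hr0 hΛx0 (hgpos y) (hgpos _) hgy
      set G : EuclideanSpace ℝ (Fin n) → ℝ := fun x => Λ x ^ 2 with hG_def
      have hGpos : ∀ x, 0 < G x := fun x => pow_pos (hΛpos x) 2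
      have hGcont : Continuous G := by
        apply Continuous.pow
        apply Continuous.rpow_const
        · exact continuous_const.div hg fun x => (hgpos x).ne'
        · exact fun x => Or.inl (div_pos hsL (hgpos x)).ne'
      have hE : ∀ x y, y ≠ x →
          G y * G x = dist y x ^ 2 * G (x + (G x / dist y x ^ 2) • (y - x)) := by
        intro x y hy
        have hk := hKey x y hy
        have hr0 : (0:ℝ) < dist y x := dist_pos.mpr hy
        have hΛx0 : 0 < Λ x := hΛpos x
        show Λ y ^ 2 * Λ x ^ 2 = dist y x ^ 2 * Λ (x + (Λ x ^ 2 / dist y x ^ 2) • (y - x)) ^ 2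
        rw [hk]
        field_simp
      -- existence of a global minimum of G
      obtain ⟨z, hzK, hzmin⟩ :=
        (isCompact_closedBall (0 : EuclideanSpace ℝ (Fin n)) (G 0)).exists_isMinOn
          ⟨0, Metric.mem_closedBall_self (hGpos 0).le⟩ hGcont.continuousOn
      have hgrow : ∀ y : EuclideanSpace ℝ (Fin n), 1 ≤ ‖y‖ → G z / G 0 * ‖y‖ ^ 2 ≤ G y := by
        intro y hy1
        have hyn : (0:ℝ) < ‖y‖ := lt_of_lt_of_le zero_lt_one hy1
        have hy0 : y ≠ 0 := by
          intro hc; rw [hc, norm_zero] at hyn; exact lt_irrefl 0 hyn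
        have hEy := hE 0 y hy0
        rw [dist_zero_right] at hEy
        have hmz : G z ≤ G ((G 0 / ‖y‖ ^ 2) • y) := by
          apply hzmin
          rw [Metric.mem_closedBall, dist_zero_right, norm_smul, Real.norm_eq_abs,
            abs_of_nonneg (by positivity : (0:ℝ) ≤ G 0 / ‖y‖ ^ 2)]
          have hcalc : G 0 / ‖y‖ ^ 2 * ‖y‖ = G 0 / ‖y‖ := by
            field_simp
          rw [hcalc]
          exact div_le_self (hGpos 0).le hy1
        have hsimp : (0 : EuclideanSpace ℝ (Fin n)) + (G 0 / ‖y‖ ^ 2) • (y - 0)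
            = (G 0 / ‖y‖ ^ 2) • y := by
          rw [sub_zero, zero_add]
        rw [hsimp] at hEy
        rw [div_mul_eq_mul_div, div_le_iff₀ (hGpos 0)]
        nlinarith [sq_nonneg ‖y‖]
      have htop : Tendsto G (cocompact (EuclideanSpace ℝ (Fin n))) atTop := by
        refine tendsto_atTop_mono' _ ?_
          (((tendsto_pow_atTop two_ne_zero).const_mul_atTop
            (div_pos (hGpos z) (hGpos 0))).comp tendsto_norm_cocompact_atTop)
        filter_upwards [tendsto_norm_cocompact_atTop.eventually_ge_atTop 1] with y hy
        exact hgrow y hy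
      obtain ⟨xb, hxbmin⟩ := hGcont.exists_forall_le htop
      have hd0 : 0 < G xb := hGpos xb
      -- along every line through the minimum point, G is the standard quadratic
      have hline : ∀ x, G x = G xb + ‖x - xb‖ ^ 2 := by
        intro x
        rcases eq_or_ne x xb with rfl | hxxb
        · simp
        · have hnx : (0:ℝ) < ‖x - xb‖ := by
            rw [norm_pos_iff]; exact sub_ne_zero.mpr hxxb
          set e' : EuclideanSpace ℝ (Fin n) := ‖x - xb‖⁻¹ • (x - xb) with he'_def
          have he'1 : ‖e'‖ = 1 := by
            rw [he'_def, norm_smul, Real.norm_eq_abs, abs_inv, abs_norm]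
            field_simp
          have he'0 : e' ≠ 0 := by
            intro hc
            rw [hc, norm_zero] at he'1
            norm_num at he'1
          set φ : ℝ → ℝ := fun t => G (xb + t • e') with hφ_def
          have hφpos : ∀ t, 0 < φ t := fun t => hGpos _
          have hφ0 : φ 0 = G xb := by
            have : xb + (0:ℝ) • e' = xb := by rw [zero_smul, add_zero]
            show G (xb + (0:ℝ) • e') = G xb
            rw [this]
          have hφmin : ∀ t, φ 0 ≤ φ t := fun t => by rw [hφ0]; exact hxbmin _
          have hφFE : ∀ s' t, t ≠ s' →
              φ s' * φ t = (t - s') ^ 2 * φ (s' + φ s' / (t - s')) := by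
            intro s' t hts
            have hts' : t - s' ≠ 0 := sub_ne_zero.mpr hts
            have hyx : (xb + t • e') - (xb + s' • e') = (t - s') • e' := by module
            have hyne : xb + t • e' ≠ xb + s' • e' := by
              intro hc
              have h2 : (t - s') • e' = 0 := by rw [← hyx, hc, sub_self]
              rcases smul_eq_zero.mp h2 with h3 | h3
              · exact hts' h3
              · exact he'0 h3
            have hdts : dist (xb + t • e') (xb + s' • e') = |t - s'| := by
              rw [dist_eq_norm, hyx, norm_smul, he'1, mul_one, Real.norm_eq_abs]
            have hEst := hE (xb + s' • e') (xb + t • e') hyne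
            rw [hdts, hyx, sq_abs] at hEst
            have hcoef : (xb + s' • e') + (G (xb + s' • e') / (t - s') ^ 2) • ((t - s') • e')
                = xb + (s' + G (xb + s' • e') / (t - s')) • e' := by
              rw [smul_smul (G (xb + s' • e') / (t - s') ^ 2) (t - s') e']
              have h4 : G (xb + s' • e') / (t - s') ^ 2 * (t - s')
                  = G (xb + s' • e') / (t - s') := by
                field_simp
              rw [h4]
              module
            rw [hcoef] at hEst
            show G (xb + s' • e') * G (xb + t • e')
              = (t - s') ^ 2 * G (xb + (s' + G (xb + s' • e') / (t - s')) • e')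
            linarith [hEst]
          have hq := oneD_FE φ hφpos hφmin hφFE ‖x - xb‖
          have hxx : xb + ‖x - xb‖ • e' = x := by
            rw [he'_def, smul_smul, mul_inv_cancel₀ hnx.ne', one_smul]
            abel
          rw [hφ0] at hq
          calc G x = φ ‖x - xb‖ := by rw [hφ_def]; simp only []; rw [hxx]
            _ = G xb + ‖x - xb‖ ^ 2 := hq
      -- unwind: compute g and then f
      have hgval : ∀ x, g x = a0 * (1 / (G xb + ‖x - xb‖ ^ 2)) ^ (μ / 2) := by
        intro x
        have h1 : Λ x ^ 2 = G xb + ‖x - xb‖ ^ 2 := hline x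
        have h2 : Λ x ^ μ * g x = a0 := hΛμ x
        have h3 : (G xb + ‖x - xb‖ ^ 2) ^ (μ/2) = Λ x ^ μ := by
          rw [← h1, ← Real.rpow_natCast (Λ x) 2, ← Real.rpow_mul (hΛpos x).le]
          congr 1
          push_cast
          ring
        have h4 : (0:ℝ) < G xb + ‖x - xb‖ ^ 2 := by positivity
        rw [one_div, Real.inv_rpow h4.le, h3]
        have h5 : (0:ℝ) < Λ x ^ μ := Real.rpow_pos_of_pos (hΛpos x) μ
        field_simp
        linarith [h2]
      refine ⟨a0, G xb, xb, hsL.le, hd0, ?_⟩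
      rcases hs1 with hs | hs
      · left
        intro x
        have h6 := hgval x
        rw [hg_def] at h6
        simp only [hs, one_mul] at h6
        exact h6
      · right
        intro x
        have h6 := hgval x
        rw [hg_def] at h6
        simp only [hs] at h6
        linarith [h6]
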